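/- Let t ≥ 1, let n_1,…,n_t ≥ 1, and for each i let G_i ∈ 𝔽_{q^m}^{k×n_i} be a matrix whose n_i columns are linearly independent over 𝔽_q, with U_i ⊆ 𝔽_{q^m}^k the 𝔽_q-span of the columns of G_i. Then for every nonzero v ∈ 𝔽_{q^m}^k, the sum over all one-dimensional 𝔽_{q^m}-subspaces V of 𝔽_{q^m}^k that are NOT contained in v^⊥ of the quantities Σ_{i=1}^t (q^{dim_{𝔽_q}(U_i ∩ V)} − 1)/(q − 1) equals Σ_{i=1}^t (q^{n_i} − q^{n_i − rk_q(v·G_i)})/(q − 1). (This sum is the Hamming weight of the codeword of the associated Hamming-metric code obtained via the extension map Ext, which replaces each U_i by the points of its linear set counted with multiplicity (q^{weight}−1)/(q−1).) -/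

import Mathlib

open Matrix

/-- The dot-product functional `w ↦ ∑ j, v j * w j`. -/
noncomputable def dotL (Fqm : Type) [Field Fqm] {k : ℕ} (v : Fin k → Fqm) :
    (Fin k → Fqm) →ₗ[Fqm] Fqm where
  toFun w := ∑ j, v j * w j
  map_add' x y := by simp [mul_add, Finset.sum_add_distrib]
  map_smul' c x := by
    simp only [Pi.smul_apply, smul_eq_mul, RingHom.id_apply, Finset.mul_sum]
    exact Finset.sum_congr rfl fun j _ => by ring

section Aux

variable {Fq Fqm : Type} [Field Fq] [Field Fqm] [Fintype Fq] [Fintype Fqm] [Algebra Fq Fqm]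
variable {k : ℕ}

private lemma geom_mul (q : ℕ) (hq : 1 ≤ q) (d : ℕ) :
    (q - 1) * ∑ j ∈ Finset.range d, q ^ j = q ^ d - 1 := by
  induction d with
  | zero => simp
  | succ d ih =>
    have h1 : 1 ≤ q ^ d := Nat.one_le_pow _ _ hq
    have h2 : q ^ d ≤ q ^ (d + 1) := Nat.pow_le_pow_right hq (by omega)
    have h3 : (q - 1) * q ^ d = q ^ (d + 1) - q ^ d := by
      rw [Nat.sub_mul, one_mul, ← pow_succ']
    rw [Finset.sum_range_succ, Nat.mul_add, ih, h3]
    omega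

open Classical in
private lemma count_lines (U : Submodule Fq (Fin k → Fqm)) (L : (Fin k → Fqm) →ₗ[Fqm] Fqm)
    (Sfin : Finset (Submodule Fqm (Fin k → Fqm)))
    (hSfin : ∀ V, V ∈ Sfin ↔ Module.finrank Fqm V = 1 ∧ ¬ V ≤ LinearMap.ker L) :
    ∑ V ∈ Sfin, (Fintype.card Fq ^ Module.finrank Fq ↥(U ⊓ Submodule.restrictScalars Fq V) - 1)
      = Fintype.card Fq ^ Module.finrank Fq U
        - Fintype.card Fq ^ Module.finrank Fq
            ↥(U ⊓ Submodule.restrictScalars Fq (LinearMap.ker L)) := by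
  classical
  set T : Finset (Fin k → Fqm) := Finset.univ.filter (fun u => u ∈ U ∧ L u ≠ 0) with hT
  -- cardinality of a submodule as a filter
  have cardW : ∀ W : Submodule Fq (Fin k → Fqm),
      (Finset.univ.filter (fun u => u ∈ W)).card = Fintype.card Fq ^ Module.finrank Fq W := by
    intro W
    rw [← Fintype.card_subtype]
    exact Module.card_eq_pow_finrank
  have key1 : T.card = ∑ V ∈ Sfin, (T.filter (fun u => Submodule.span Fqm {u} = V)).card := by
    apply Finset.card_eq_sum_card_fiberwise
    intro u hu
    simp only [Finset.mem_coe, hT, Finset.mem_filter, Finset.mem_univ, true_and] at hu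
    have hu0 : u ≠ 0 := by rintro rfl; exact hu.2 (map_zero L)
    show Submodule.span Fqm {u} ∈ Sfin
    rw [hSfin]
    exact ⟨finrank_span_singleton hu0,
      fun hle => hu.2 (hle (Submodule.mem_span_singleton_self u))⟩
  have key2 : ∀ V ∈ Sfin, (T.filter (fun u => Submodule.span Fqm {u} = V)).card
      = Fintype.card Fq ^ Module.finrank Fq ↥(U ⊓ Submodule.restrictScalars Fq V) - 1 := by
    intro V hV
    rw [hSfin] at hV
    have hset : T.filter (fun u => Submodule.span Fqm {u} = V)
        = (Finset.univ.filter
            (fun u => u ∈ U ⊓ Submodule.restrictScalars Fq V)).erase 0 := by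
      ext u
      simp only [hT, Finset.mem_filter, Finset.mem_univ, true_and, Finset.mem_erase,
        Submodule.mem_inf, Submodule.restrictScalars_mem]
      constructor
      · rintro ⟨⟨huU, huL⟩, hspan⟩
        have hu0 : u ≠ 0 := by rintro rfl; exact huL (map_zero L)
        exact ⟨hu0, huU, hspan ▸ Submodule.mem_span_singleton_self u⟩
      · rintro ⟨hu0, huU, huV⟩
        have hle : Submodule.span Fqm {u} ≤ V := by
          rwa [Submodule.span_singleton_le_iff_mem]
        have hspan : Submodule.span Fqm {u} = V :=
          Submodule.eq_of_le_of_finrank_le hle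
            (by rw [hV.1, finrank_span_singleton hu0])
        refine ⟨⟨huU, fun hLu => hV.2 ?_⟩, hspan⟩
        rw [← hspan, Submodule.span_singleton_le_iff_mem, LinearMap.mem_ker]
        exact hLu
    rw [hset, Finset.card_erase_of_mem (by simp), cardW]
  have key3 := Finset.card_filter_add_card_filter_not
      (s := Finset.univ.filter (fun u : Fin k → Fqm => u ∈ U)) (p := fun u => L u ≠ 0)
  rw [Finset.filter_filter, Finset.filter_filter] at key3
  simp only [not_not] at key3
  have hker : (Finset.univ.filter (fun u : Fin k → Fqm => u ∈ U ∧ L u = 0))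
      = Finset.univ.filter
          (fun u => u ∈ U ⊓ Submodule.restrictScalars Fq (LinearMap.ker L)) := by
    ext u
    simp [Submodule.mem_inf]
  rw [hker] at key3
  have hTc : T.card + (Fintype.card Fq ^ Module.finrank Fq
      ↥(U ⊓ Submodule.restrictScalars Fq (LinearMap.ker L)))
      = Fintype.card Fq ^ Module.finrank Fq U := by
    rw [← cardW U, ← cardW (U ⊓ Submodule.restrictScalars Fq (LinearMap.ker L)), ← key3]
  rw [Finset.sum_congr rfl key2] at key1
  omega

private lemma finrank_inf_ker (nn : ℕ) (c : Fin nn → (Fin k → Fqm))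
    (hc : LinearIndependent Fq c) (L : (Fin k → Fqm) →ₗ[Fqm] Fqm)
    (w : Fin nn → Fqm) (hw : ∀ j, w j = L (c j)) :
    Module.finrank Fq ↥(Submodule.span Fq (Set.range c)
        ⊓ Submodule.restrictScalars Fq (LinearMap.ker L))
      = nn - Module.finrank Fq (Submodule.span Fq (Set.range w))
    ∧ Module.finrank Fq (Submodule.span Fq (Set.range w)) ≤ nn := by
  classical
  set φ : (Fin nn → Fq) →ₗ[Fq] (Fin k → Fqm) := Fintype.linearCombination Fq c with hφ
  have hφ_apply : ∀ x, φ x = ∑ j, x j • c j := fun x => rfl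
  have hinj : Function.Injective φ := by
    rw [← LinearMap.ker_eq_bot]
    apply (Submodule.eq_bot_iff _).2
    intro x hx
    funext j
    exact Fintype.linearIndependent_iff.mp hc x hx j
  set ψ : (Fin nn → Fq) →ₗ[Fq] Fqm := (L.restrictScalars Fq).comp φ with hψ
  have hψ_eq : ψ = Fintype.linearCombination Fq w := by
    apply LinearMap.ext
    intro x
    rw [hψ, LinearMap.comp_apply]
    simp only [LinearMap.coe_restrictScalars, hφ_apply, Fintype.linearCombination_apply,
      map_sum]
    refine Finset.sum_congr rfl fun j _ => ?_
    rw [hw j]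
    exact LinearMap.map_smul_of_tower L (x j) (c j)
  have hrange : LinearMap.range ψ = Submodule.span Fq (Set.range w) := by
    rw [hψ_eq, Fintype.range_linearCombination]
  have hmap : Submodule.map φ (LinearMap.ker ψ)
      = Submodule.span Fq (Set.range c)
        ⊓ Submodule.restrictScalars Fq (LinearMap.ker L) := by
    rw [hψ, LinearMap.ker_comp, Submodule.map_comap_eq, hφ,
      Fintype.range_linearCombination, LinearMap.ker_restrictScalars]
  have hdim1 : Module.finrank Fq ↥(Submodule.span Fq (Set.range c)
      ⊓ Submodule.restrictScalars Fq (LinearMap.ker L))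
      = Module.finrank Fq (LinearMap.ker ψ) := by
    rw [← hmap]
    exact (LinearEquiv.finrank_eq
      (Submodule.equivMapOfInjective φ hinj (LinearMap.ker ψ))).symm
  have hrn := LinearMap.finrank_range_add_finrank_ker ψ
  rw [hrange, Module.finrank_pi, Fintype.card_fin] at hrn
  constructor
  · omega
  · omega

end Aux

/-- Hamming weight of the codeword of the associated Hamming-metric code:
the sum, over all one-dimensional `Fqm`-subspaces `V` of `Fqm^k` not contained in `v^⊥`, of
`∑ i (q^{dim_{Fq}(U i ∩ V)} − 1)/(q − 1)` equals
`∑ i (q^{n i} − q^{n i − rk_q(v·G i)})/(q − 1)`. -/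
theorem ext_code_weight
    (Fq Fqm : Type) [Field Fq] [Field Fqm] [Fintype Fq] [Fintype Fqm] [Algebra Fq Fqm]
    (q : ℕ) (hq : Fintype.card Fq = q)
    (t k : ℕ) (ht : 1 ≤ t) (n : Fin t → ℕ) (hn : ∀ i, 1 ≤ n i)
    (G : ∀ i : Fin t, Matrix (Fin k) (Fin (n i)) Fqm)
    (hG : ∀ i, LinearIndependent Fq (fun j : Fin (n i) => (G i)ᵀ j))
    (v : Fin k → Fqm) (hv : v ≠ 0) :
    (∑ᶠ V ∈ {V : Submodule Fqm (Fin k → Fqm) |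
        Module.finrank Fqm V = 1 ∧ ¬ V ≤ LinearMap.ker (dotL Fqm v)},
      ∑ i, (q ^ Module.finrank Fq
          ↥(Submodule.span Fq (Set.range (fun j : Fin (n i) => (G i)ᵀ j))
            ⊓ Submodule.restrictScalars Fq V) - 1) / (q - 1))
      = ∑ i, (q ^ n i
          - q ^ (n i - Module.finrank Fq
              (Submodule.span Fq (Set.range (Matrix.vecMul v (G i)))))) / (q - 1) := by
  classical
  subst hq
  have hq2 : 1 < Fintype.card Fq := Fintype.one_lt_card
  have h1q : 1 ≤ Fintype.card Fq := by omega
  have h01 : 0 < Fintype.card Fq - 1 := by omega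
  haveI : Finite (Submodule Fqm (Fin k → Fqm)) :=
    Finite.of_injective (fun W : Submodule Fqm (Fin k → Fqm) => (W : Set (Fin k → Fqm)))
      SetLike.coe_injective
  have hSf : {V : Submodule Fqm (Fin k → Fqm) |
      Module.finrank Fqm V = 1 ∧ ¬ V ≤ LinearMap.ker (dotL Fqm v)}.Finite :=
    Set.toFinite _
  rw [← hSf.coe_toFinset, finsum_mem_coe_finset, Finset.sum_comm]
  have hmem : ∀ V, V ∈ hSf.toFinset ↔
      Module.finrank Fqm V = 1 ∧ ¬ V ≤ LinearMap.ker (dotL Fqm v) := by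
    intro V; rw [Set.Finite.mem_toFinset]; rfl
  apply Finset.sum_congr rfl
  intro i _
  have hcv : ∀ j : Fin (n i), Matrix.vecMul v (G i) j = dotL Fqm v ((G i)ᵀ j) := by
    intro j
    show _ = ∑ l, v l * (G i)ᵀ j l
    simp [Matrix.vecMul, dotProduct, Matrix.transpose_apply]
  have hdim := finrank_inf_ker (Fq := Fq) (n i) (fun j => (G i)ᵀ j) (hG i) (dotL Fqm v)
    (Matrix.vecMul v (G i)) hcv
  obtain ⟨hdim1, hrle⟩ := hdim
  have hU : Module.finrank Fq
      (Submodule.span Fq (Set.range (fun j : Fin (n i) => (G i)ᵀ j))) = n i := by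
    rw [finrank_span_eq_card (hG i), Fintype.card_fin]
  have hcount := count_lines
    (Submodule.span Fq (Set.range (fun j : Fin (n i) => (G i)ᵀ j))) (dotL Fqm v)
    hSf.toFinset hmem
  rw [hU, hdim1] at hcount
  set r := Module.finrank Fq (Submodule.span Fq (Set.range (Matrix.vecMul v (G i)))) with hr
  have hdiv : ∀ m : ℕ, (Fintype.card Fq ^ m - 1) / (Fintype.card Fq - 1)
      = ∑ j ∈ Finset.range m, Fintype.card Fq ^ j := by
    intro m
    rw [← geom_mul (Fintype.card Fq) h1q m, Nat.mul_div_cancel_left _ h01]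
  have hX : (Fintype.card Fq - 1)
        * (Fintype.card Fq ^ (n i - r) * ∑ j ∈ Finset.range r, Fintype.card Fq ^ j)
      = Fintype.card Fq ^ n i - Fintype.card Fq ^ (n i - r) := by
    rw [mul_left_comm, geom_mul (Fintype.card Fq) h1q, Nat.mul_sub, mul_one, ← pow_add,
      Nat.sub_add_cancel hrle]
  have step1 : (∑ V ∈ hSf.toFinset,
      (Fintype.card Fq ^ Module.finrank Fq
          ↥(Submodule.span Fq (Set.range (fun j : Fin (n i) => (G i)ᵀ j))
            ⊓ Submodule.restrictScalars Fq V) - 1) / (Fintype.card Fq - 1))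
      = ∑ V ∈ hSf.toFinset, ∑ j ∈ Finset.range (Module.finrank Fq
          ↥(Submodule.span Fq (Set.range (fun j : Fin (n i) => (G i)ᵀ j))
            ⊓ Submodule.restrictScalars Fq V)), Fintype.card Fq ^ j :=
    Finset.sum_congr rfl fun V _ => hdiv _
  have step2 : (∑ V ∈ hSf.toFinset, ∑ j ∈ Finset.range (Module.finrank Fq
          ↥(Submodule.span Fq (Set.range (fun j : Fin (n i) => (G i)ᵀ j))
            ⊓ Submodule.restrictScalars Fq V)), Fintype.card Fq ^ j)
      = Fintype.card Fq ^ (n i - r) * ∑ j ∈ Finset.range r, Fintype.card Fq ^ j := by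
    apply Nat.eq_of_mul_eq_mul_left h01
    rw [Finset.mul_sum, hX]
    rw [Finset.sum_congr rfl fun V _ => geom_mul (Fintype.card Fq) h1q _]
    exact hcount
  have step3 : (Fintype.card Fq ^ n i - Fintype.card Fq ^ (n i - r)) / (Fintype.card Fq - 1)
      = Fintype.card Fq ^ (n i - r) * ∑ j ∈ Finset.range r, Fintype.card Fq ^ j := by
    rw [← hX, Nat.mul_div_cancel_left _ h01]
  rw [step1, step2, step3]
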